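/- Let (Λ, q) be a nondegenerate lattice of rank 2 that represents 0, so that its discriminant equals -d² for some strictly positive integer d. Let α ∈ Λ be primitive isotropic and complete it to a basis {α, β} with q(β) ≥ 0. Then for any γ ∈ Λ with q(γ) < 0 one has q(γ) ≤ -2d/(1 + q(β)). -/

import Mathlib

private lemma core43 (c d x y : ℤ) (hd : 1 ≤ d) (hc : 0 ≤ c) (hy : 1 ≤ y)
    (hneg : 2*x*y*d + y*y*c < 0) : (2*x*y*d + y*y*c)*(1+c) + 2*d ≤ 0 := by
  have hx : 2*x*d + c*y ≤ -1 := by nlinarith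
  have hxneg : x ≤ -1 := by nlinarith
  nlinarith [mul_nonneg (sub_nonneg.mpr hy) (by linarith : (0:ℤ) ≤ -(2*x*d + c*y)),
    mul_nonneg (mul_nonneg hc (by linarith : (0:ℤ) ≤ y)) (by linarith : (0:ℤ) ≤ -(2*x*d + c*y) - 1)]

private lemma main43 (b c d x y : ℤ) (hd : 0 < d) (hb : b^2 = d^2) (hc : 0 ≤ c)
    (hneg : 2*x*y*b + y*y*c < 0) : (2*x*y*b + y*y*c)*(1+c) + 2*d ≤ 0 := by
  have hy0 : y ≠ 0 := by rintro rfl; simp at hneg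
  have hbd : b = d ∨ b = -d := by
    have h0 : (b - d) * (b + d) = 0 := by nlinarith [hb]
    rcases mul_eq_zero.mp h0 with h | h
    · left; linarith
    · right; linarith
  rcases hbd with h | h <;> rw [h] at hneg ⊢ <;> rcases hy0.lt_or_gt with hy | hy
  · have := core43 c d (-x) (-y) hd hc (by omega) (by nlinarith)
    nlinarith
  · have := core43 c d x y hd hc (by omega) (by nlinarith)
    nlinarith
  · have := core43 c d x (-y) hd hc (by omega) (by nlinarith)
    nlinarith
  · have := core43 c d (-x) y hd hc (by omega) (by nlinarith)
    nlinarith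

theorem stmt0 (Λ : Type*) [AddCommGroup Λ] [Module ℤ Λ]
    (B : Λ →ₗ[ℤ] Λ →ₗ[ℤ] ℤ) (hsymm : ∀ x y, B x y = B y x)
    (bas : Module.Basis (Fin 2) ℤ Λ) (α β : Λ) (hα : bas 0 = α) (hβ : bas 1 = β)
    (d : ℤ) (hd : 0 < d)
    (hdisc : (Matrix.of fun i j => B (bas i) (bas j)).det = -d ^ 2)
    (hiso : B α α = 0)
    (hprim : ∀ (k : ℤ) (v : Λ), α = k • v → IsUnit k)
    (hβpos : 0 ≤ B β β)
    (γ : Λ) (hγ : B γ γ < 0) :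
    ((B γ γ : ℤ) : ℚ) ≤ -2 * (d : ℚ) / (1 + (B β β : ℤ)) := by
  set b := B α β with hb
  set c := B β β with hc
  have hdet : -(b * b) = -d ^ 2 := by
    have := hdisc
    rw [Matrix.det_fin_two] at this
    simp only [Matrix.of_apply, hα, hβ] at this
    rw [hiso, hsymm β α] at this
    linarith
  have hbsq : b ^ 2 = d ^ 2 := by ring_nf; ring_nf at hdet; linarith
  set x := bas.repr γ 0 with hx
  set y := bas.repr γ 1 with hy
  have h1 := bas.sum_repr γ
  rw [Fin.sum_univ_two, hα, hβ] at h1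
  have hgram : B γ γ = 2 * x * y * b + y * y * c := by
    rw [← h1]
    simp only [map_add, map_smul, LinearMap.add_apply, LinearMap.smul_apply, smul_eq_mul, hiso]
    rw [hsymm β α]
    ring
  rw [hgram] at hγ ⊢
  have key := main43 b c d x y hd hbsq hβpos hγ
  have hcpos : (0:ℚ) < 1 + (c:ℚ) := by positivity
  rw [le_div_iff₀ hcpos]
  have hle : ((2 * x * y * b + y * y * c) * (1 + c) : ℤ) ≤ -2*d := by linarith
  calc ((2 * x * y * b + y * y * c : ℤ) : ℚ) * (1 + (c:ℚ))
      = (((2 * x * y * b + y * y * c) * (1 + c) : ℤ) : ℚ) := by push_cast; ring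
    _ ≤ ((-2*d : ℤ) : ℚ) := by exact_mod_cast hle
    _ = -2 * d := by push_cast; ring
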